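/- arXiv:2406.05710 — 3 statements merged into one kernel-verified Lean document; each statement's English description precedes it below -/
import Mathlib

section
/- Let ξ₁, …, ξ_m be exchangeable random elements in a measurable space that are almost surely pairwise distinct, and let ψ be a ranking function. Then ψ(ξ₁, …, ξ_m) is uniformly distributed on {1, …, m}. -/
open MeasureTheory ProbabilityTheory
open scoped ENNReal

/-- The rank of a.s. pairwise distinct exchangeable random elements, computed by a ranking
function, is uniformly distributed. -/
theorem stmt3 {Ω 𝔸 : Type*} [MeasurableSpace Ω] [MeasurableSpace 𝔸]
    (P : Measure Ω) [IsProbabilityMeasure P] (m : ℕ) (hm : 0 < m)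
    (ψ : (Fin m → 𝔸) → Fin m) (hψmeas : Measurable ψ)
    (hP1 : ∀ (a : Fin m → 𝔸) (σ : Equiv.Perm (Fin m)), σ ⟨0, hm⟩ = ⟨0, hm⟩ →
      ψ (a ∘ σ) = ψ a)
    (hP2 : ∀ (a : Fin m → 𝔸) (i j : Fin m), a i ≠ a j →
      ψ (a ∘ Equiv.swap ⟨0, hm⟩ i) ≠ ψ (a ∘ Equiv.swap ⟨0, hm⟩ j))
    (ξ : Ω → Fin m → 𝔸) (hξ : Measurable ξ)
    (hexch : ∀ σ : Equiv.Perm (Fin m),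
      Measure.map (fun ω => ξ ω ∘ σ) P = Measure.map ξ P)
    (hdist : ∀ᵐ ω ∂P, ∀ i j : Fin m, i ≠ j → ξ ω i ≠ ξ ω j) :
    ∀ r : Fin m, P {ω | ψ (ξ ω) = r} = (m : ℝ≥0∞)⁻¹ := by
  intro r
  set z : Fin m := ⟨0, hm⟩ with hz
  set S : Set (Fin m → 𝔸) := ψ ⁻¹' {r} with hS
  have hSmeas : MeasurableSet S := hψmeas (measurableSet_singleton r)
  set A : Fin m → Set Ω := fun i => (fun ω => ξ ω ∘ Equiv.swap z i) ⁻¹' S with hA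
  have hmap : ∀ i, Measurable (fun ω => ξ ω ∘ Equiv.swap z i) := fun i =>
    measurable_pi_lambda _ (fun j => (measurable_pi_apply _).comp hξ)
  have hAmeas : ∀ i, MeasurableSet (A i) := fun i => (hmap i) hSmeas
  set c : ℝ≥0∞ := P {ω | ψ (ξ ω) = r} with hc
  have hAeq : ∀ i, P (A i) = c := by
    intro i
    have h1 : P (A i) = Measure.map (fun ω => ξ ω ∘ Equiv.swap z i) P S :=
      (Measure.map_apply (hmap i) hSmeas).symm
    rw [h1, hexch, Measure.map_apply hξ hSmeas]
    rfl
  set B : Set Ω := {ω | ¬ ∀ i j : Fin m, i ≠ j → ξ ω i ≠ ξ ω j} with hB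
  have hbad : P B = 0 := ae_iff.mp hdist
  -- for good ω, i ↦ ψ (ξ ω ∘ swap z i) is injective, hence surjective
  have hinj : ∀ ω ∉ B, Function.Injective (fun i => ψ (ξ ω ∘ Equiv.swap z i)) := by
    intro ω hω i j hij
    by_contra hne
    exact hP2 (ξ ω) i j (not_not.mp hω i j hne) hij
  -- pairwise AE disjoint
  have hdisj : Pairwise (Function.onFun (AEDisjoint P) A) := by
    intro i j hij
    refine measure_mono_null ?_ hbad
    intro ω hω
    intro hgood
    have := hinj ω (not_not.mpr hgood) (hω.1.trans hω.2.symm)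
    exact hij this
  have hsum : P (⋃ i, A i) = ∑ i, P (A i) := by
    rw [measure_iUnion₀ hdisj (fun i => (hAmeas i).nullMeasurableSet), tsum_fintype]
  have hcover : P (⋃ i, A i) = 1 := by
    have hle : (1 : ℝ≥0∞) ≤ P (⋃ i, A i) := by
      have hsub : (Set.univ : Set Ω) ⊆ (⋃ i, A i) ∪ B := by
        intro ω _
        by_cases hω : ω ∈ B
        · exact Or.inr hω
        · left
          have hsurj := Finite.injective_iff_surjective.mp (hinj ω hω)
          obtain ⟨i, hi⟩ := hsurj r
          exact Set.mem_iUnion.mpr ⟨i, hi⟩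
      calc (1 : ℝ≥0∞) = P Set.univ := (measure_univ).symm
        _ ≤ P ((⋃ i, A i) ∪ B) := measure_mono hsub
        _ ≤ P (⋃ i, A i) + P B := measure_union_le _ _
        _ = P (⋃ i, A i) := by rw [hbad, add_zero]
    exact le_antisymm prob_le_one hle
  have hmc : (m : ℝ≥0∞) * c = 1 := by
    have : ∑ i : Fin m, P (A i) = (m : ℝ≥0∞) * c := by
      simp [hAeq, Finset.sum_const, mul_comm]
    rw [← this, ← hsum, hcover]
  have hm0 : (m : ℝ≥0∞) ≠ 0 := by exact_mod_cast hm.ne'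
  have hmtop : (m : ℝ≥0∞) ≠ ⊤ := ENNReal.natCast_ne_top m
  calc c = ((m : ℝ≥0∞)⁻¹ * m) * c := by rw [ENNReal.inv_mul_cancel hm0 hmtop, one_mul]
    _ = (m : ℝ≥0∞)⁻¹ * ((m : ℝ≥0∞) * c) := by ring
    _ = (m : ℝ≥0∞)⁻¹ := by rw [hmc, mul_one]
end

section
/- Let X be a real random variable with mean μ and E[|X - μ|^{1+a}] ≤ M for some a ∈ (0,1]. Then for the empirical mean μ̄_n of n i.i.d. copies of X and any δ ∈ (0,1), P( μ̄_n ≤ μ + (3M/(δ n^a))^{1/(1+a)} ) ≥ 1 - δ. -/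
open MeasureTheory ProbabilityTheory
open scoped ENNReal

private lemma rpow_subadd {q : ℝ} (hq0 : 0 ≤ q) (hq1 : q ≤ 1) {x y : ℝ} (hx : 0 ≤ x)
    (hy : 0 ≤ y) : (x + y) ^ q ≤ x ^ q + y ^ q := by
  have h := NNReal.rpow_add_le_add_rpow ⟨x, hx⟩ ⟨y, hy⟩ hq0 hq1
  have h2 := NNReal.coe_le_coe.mpr h
  push_cast [NNReal.coe_rpow] at h2
  exact h2

private lemma caseA {p : ℝ} (hp1 : 1 < p) (hp2 : p ≤ 2) {u : ℝ} (hu : 0 ≤ u) :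
    (1 + u) ^ p ≤ 1 + p * u + u ^ p := by
  have hp0 : (0:ℝ) < p := lt_trans one_pos hp1
  set f : ℝ → ℝ := fun u => 1 + p * u + u ^ p - (1 + u) ^ p with hf
  have hcont : Continuous f := by
    refine ((continuous_const.add (continuous_const.mul continuous_id)).add
      (continuous_id.rpow_const fun x => Or.inr hp0.le)).sub
      ((continuous_const.add continuous_id).rpow_const fun x => Or.inr hp0.le)
  have hder : ∀ v ∈ Set.Ioi (0:ℝ), HasDerivAt f (p * (1 + v ^ (p-1) - (1+v) ^ (p-1))) v := by
    intro v hv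
    have hv0 : (0:ℝ) < v := hv
    have h1 : HasDerivAt (fun x : ℝ => x ^ p) (p * v ^ (p-1)) v :=
      Real.hasDerivAt_rpow_const (Or.inl hv0.ne')
    have h2 : HasDerivAt (fun x : ℝ => (1 + x) ^ p) (p * (1+v) ^ (p-1) * 1) v := by
      have hin : HasDerivAt (fun x : ℝ => 1 + x) 1 v := (hasDerivAt_id v).const_add 1
      exact (Real.hasDerivAt_rpow_const (p := p) (x := 1 + v)
        (Or.inl (by positivity))).comp v hin
    have h3 : HasDerivAt (fun x : ℝ => 1 + p * x) p v := by
      simpa using ((hasDerivAt_id v).const_mul p).const_add 1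
    have := (h3.add h1).sub h2
    exact this.congr_deriv (by ring)
  have hmono : MonotoneOn f (Set.Ici (0:ℝ)) := by
    refine monotoneOn_of_deriv_nonneg (convex_Ici 0) hcont.continuousOn ?_ ?_
    · rw [interior_Ici]
      exact fun v hv => (hder v hv).differentiableAt.differentiableWithinAt
    · rw [interior_Ici]
      intro v hv
      rw [(hder v hv).deriv]
      have hv0 : (0:ℝ) < v := hv
      have hsub : (1 + v) ^ (p-1) ≤ 1 + v ^ (p-1) := by
        have := rpow_subadd (q := p - 1) (by linarith) (by linarith) (x := 1) (y := v) zero_le_one hv0.le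
        simpa [Real.one_rpow] using this
      nlinarith
  have h0 : f 0 = 0 := by
    simp [hf, Real.zero_rpow hp0.ne', Real.one_rpow]
  have := hmono (Set.self_mem_Ici) (Set.mem_Ici.mpr hu) hu
  rw [h0] at this
  simp only [hf] at this
  linarith

private lemma caseB {p : ℝ} (hp1 : 1 < p) (hp2 : p ≤ 2) {u : ℝ} (hu1 : -1 ≤ u) (hu0 : u ≤ 0) :
    (1 + u) ^ p ≤ 1 + p * u + 2 * (-u) ^ p := by
  have hp0 : (0:ℝ) < p := lt_trans one_pos hp1
  set g : ℝ → ℝ := fun u => 1 + p * u + 2 * (-u) ^ p - (1 + u) ^ p with hg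
  have hcont : Continuous g := by
    refine ((continuous_const.add (continuous_const.mul continuous_id)).add
      (continuous_const.mul (continuous_neg.rpow_const fun x => Or.inr hp0.le))).sub
      ((continuous_const.add continuous_id).rpow_const fun x => Or.inr hp0.le)
  have hder : ∀ v ∈ Set.Ioo (-1:ℝ) 0,
      HasDerivAt g (p * (1 - 2 * (-v) ^ (p-1) - (1+v) ^ (p-1))) v := by
    intro v hv
    obtain ⟨hv1, hv0⟩ := hv
    have h1 : HasDerivAt (fun x : ℝ => (-x) ^ p) (p * (-v) ^ (p-1) * (-1)) v := by
      exact (Real.hasDerivAt_rpow_const (p := p) (x := -v)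
        (Or.inl (by linarith))).comp v (hasDerivAt_neg v)
    have h2 : HasDerivAt (fun x : ℝ => (1 + x) ^ p) (p * (1+v) ^ (p-1) * 1) v := by
      exact (Real.hasDerivAt_rpow_const (p := p) (x := 1 + v)
        (Or.inl (by linarith))).comp v ((hasDerivAt_id v).const_add 1)
    have h3 : HasDerivAt (fun x : ℝ => 1 + p * x) p v := by
      simpa using ((hasDerivAt_id v).const_mul p).const_add 1
    have := (h3.add (h1.const_mul 2)).sub h2
    exact this.congr_deriv (by ring)
  have hanti : AntitoneOn g (Set.Icc (-1:ℝ) 0) := by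
    refine antitoneOn_of_deriv_nonpos (convex_Icc _ _) hcont.continuousOn ?_ ?_
    · rw [interior_Icc]
      exact fun v hv => (hder v hv).differentiableAt.differentiableWithinAt
    · rw [interior_Icc]
      intro v hv
      rw [(hder v hv).deriv]
      obtain ⟨hv1, hv0⟩ := hv
      have hsub : (1:ℝ) ≤ (-v) ^ (p-1) + (1+v) ^ (p-1) := by
        have := rpow_subadd (q := p - 1) (by linarith) (by linarith) (x := -v) (y := 1 + v)
          (by linarith) (by linarith)
        rw [show -v + (1 + v) = 1 by ring, Real.one_rpow] at this
        exact this
      have hnn : (0:ℝ) ≤ (-v) ^ (p-1) := Real.rpow_nonneg (by linarith) _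
      nlinarith
  have h0 : g 0 = 0 := by
    simp [hg, Real.zero_rpow hp0.ne', Real.one_rpow]
  have := hanti (Set.mem_Icc.mpr ⟨hu1, hu0⟩) (Set.mem_Icc.mpr ⟨by norm_num, le_refl 0⟩) hu0
  rw [h0] at this
  simp only [hg] at this
  linarith

private lemma caseC {p : ℝ} (hp1 : 1 < p) (hp2 : p ≤ 2) {u : ℝ} (hu : u ≤ -1) :
    (-(1 + u)) ^ p ≤ 1 + p * u + 2 * (-u) ^ p := by
  have hp0 : (0:ℝ) < p := lt_trans one_pos hp1
  set h : ℝ → ℝ := fun u => 1 + p * u + 2 * (-u) ^ p - (-(1 + u)) ^ p with hh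
  have hcont : Continuous h := by
    refine ((continuous_const.add (continuous_const.mul continuous_id)).add
      (continuous_const.mul (continuous_neg.rpow_const fun x => Or.inr hp0.le))).sub
      (((continuous_const.add continuous_id).neg).rpow_const fun x => Or.inr hp0.le)
  have hder : ∀ v ∈ Set.Iio (-1:ℝ),
      HasDerivAt h (p * (1 - 2 * (-v) ^ (p-1) + (-(1+v)) ^ (p-1))) v := by
    intro v hv
    have hv1 : v < -1 := hv
    have h1 : HasDerivAt (fun x : ℝ => (-x) ^ p) (p * (-v) ^ (p-1) * (-1)) v := by
      exact (Real.hasDerivAt_rpow_const (p := p) (x := -v)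
        (Or.inl (by linarith))).comp v (hasDerivAt_neg v)
    have h2 : HasDerivAt (fun x : ℝ => (-(1 + x)) ^ p) (p * (-(1+v)) ^ (p-1) * (-1)) v := by
      have hin : HasDerivAt (fun x : ℝ => -(1 + x)) (-1) v := ((hasDerivAt_id v).const_add 1).neg
      exact (Real.hasDerivAt_rpow_const (p := p) (x := -(1 + v))
        (Or.inl (by linarith))).comp v hin
    have h3 : HasDerivAt (fun x : ℝ => 1 + p * x) p v := by
      simpa using ((hasDerivAt_id v).const_mul p).const_add 1
    have := (h3.add (h1.const_mul 2)).sub h2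
    exact this.congr_deriv (by ring)
  have hanti : AntitoneOn h (Set.Iic (-1:ℝ)) := by
    refine antitoneOn_of_deriv_nonpos (convex_Iic _) hcont.continuousOn ?_ ?_
    · rw [interior_Iic]
      exact fun v hv => (hder v hv).differentiableAt.differentiableWithinAt
    · rw [interior_Iic]
      intro v hv
      rw [(hder v hv).deriv]
      have hv1 : v < -1 := hv
      have hm : (-(1+v)) ^ (p-1) ≤ (-v) ^ (p-1) :=
        Real.rpow_le_rpow (by linarith) (by linarith) (by linarith)
      have h1 : (1:ℝ) ≤ (-v) ^ (p-1) := by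
        have := Real.rpow_le_rpow zero_le_one (show (1:ℝ) ≤ -v by linarith)
          (show (0:ℝ) ≤ p - 1 by linarith)
        simpa [Real.one_rpow] using this
      nlinarith
  have hm1 : h (-1) = 3 - p := by
    norm_num [hh, Real.zero_rpow hp0.ne', Real.one_rpow]
    ring
  have := hanti (Set.mem_Iic.mpr hu) (Set.mem_Iic.mpr (le_refl _)) hu
  rw [hm1] at this
  simp only [hh] at this
  linarith

private lemma core {p : ℝ} (hp1 : 1 < p) (hp2 : p ≤ 2) (u : ℝ) :
    |1 + u| ^ p ≤ 1 + p * u + 2 * |u| ^ p := by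
  rcases le_or_gt 0 u with hu | hu
  · rw [abs_of_nonneg (by linarith), abs_of_nonneg hu]
    have := caseA hp1 hp2 hu
    have hnn : (0:ℝ) ≤ u ^ p := Real.rpow_nonneg hu _
    linarith
  · rcases le_or_gt (-1) u with hu1 | hu1
    · rw [abs_of_nonneg (by linarith), abs_of_neg hu]
      exact caseB hp1 hp2 hu1 hu.le
    · rw [abs_of_neg (by linarith), abs_of_neg hu]
      exact caseC hp1 hp2 hu1.le

noncomputable def phi (p : ℝ) (x : ℝ) : ℝ := if 0 ≤ x then x ^ (p - 1) else -((-x) ^ (p - 1))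

private lemma phi_measurable {p : ℝ} (hp1 : 1 < p) : Measurable (phi p) := by
  refine Measurable.ite (measurableSet_le measurable_const measurable_id) ?_ ?_
  · exact (continuous_id.rpow_const fun x => Or.inr (by linarith)).measurable
  · exact ((continuous_neg.rpow_const fun x => Or.inr (by linarith)).neg).measurable

private lemma phi_abs {p : ℝ} (hp1 : 1 < p) (x : ℝ) : |phi p x| = |x| ^ (p - 1) := by
  unfold phi
  split_ifs with h
  · rw [abs_of_nonneg (Real.rpow_nonneg h _), abs_of_nonneg h]
  · rw [abs_neg, abs_of_nonneg (Real.rpow_nonneg (by linarith) _), abs_of_neg (not_le.mp h)]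

private lemma phi_neg_arg {p : ℝ} (hp1 : 1 < p) (x : ℝ) : phi p (-x) = - phi p x := by
  unfold phi
  rcases lt_trichotomy x 0 with h | h | h
  · rw [if_pos (by linarith), if_neg (by linarith)]
    simp
  · simp [h, Real.zero_rpow (show p - 1 ≠ 0 by linarith)]
  · rw [if_neg (by linarith), if_pos (by linarith)]
    simp

private lemma key {p : ℝ} (hp1 : 1 < p) (hp2 : p ≤ 2) (x y : ℝ) :
    |x + y| ^ p ≤ |x| ^ p + p * phi p x * y + 2 * |y| ^ p := by
  have hp0 : (0:ℝ) < p := lt_trans one_pos hp1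
  have main : ∀ x y : ℝ, 0 ≤ x → |x + y| ^ p ≤ |x| ^ p + p * phi p x * y + 2 * |y| ^ p := by
    intro x y hx
    rcases eq_or_lt_of_le hx with hx0 | hx0
    · subst hx0
      simp [phi, Real.zero_rpow (show p - 1 ≠ 0 by linarith), Real.zero_rpow hp0.ne']
      have : (0:ℝ) ≤ |y| ^ p := Real.rpow_nonneg (abs_nonneg _) _
      linarith
    · have hxne : x ≠ 0 := hx0.ne'
      have h := core hp1 hp2 (y / x)
      have hxp : (0:ℝ) < x ^ p := Real.rpow_pos_of_pos hx0 _
      have e1 : |x + y| ^ p = x ^ p * |1 + y / x| ^ p := by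
        have hxy : x * (1 + y / x) = x + y := by field_simp
        rw [← hxy, abs_mul, abs_of_pos hx0, Real.mul_rpow hx0.le (abs_nonneg _)]
      have e2 : x ^ p * |y / x| ^ p = |y| ^ p := by
        rw [← Real.mul_rpow hx (abs_nonneg _), abs_div, abs_of_pos hx0]
        congr 1
        field_simp
      have e3 : x ^ p * (p * (y / x)) = p * (x ^ (p - 1)) * y := by
        rw [show x ^ p = x ^ (p - 1) * x by
          rw [← Real.rpow_add_one hxne]; ring_nf]
        field_simp
      have hphi : phi p x = x ^ (p - 1) := if_pos hx
      calc |x + y| ^ p = x ^ p * |1 + y / x| ^ p := e1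
        _ ≤ x ^ p * (1 + p * (y / x) + 2 * |y / x| ^ p) := by
            exact (mul_le_mul_iff_right₀ hxp).mpr h
        _ = x ^ p + p * phi p x * y + 2 * |y| ^ p := by
            rw [mul_add, mul_add, e3, hphi, ← e2]; ring
        _ = |x| ^ p + p * phi p x * y + 2 * |y| ^ p := by rw [abs_of_pos hx0]
  rcases le_or_gt 0 x with hx | hx
  · exact main x y hx
  · have h := main (-x) (-y) (by linarith)
    rw [show -x + -y = -(x + y) by ring, abs_neg, abs_neg, abs_neg, phi_neg_arg hp1] at h
    calc |x + y| ^ p ≤ |x| ^ p + p * (-phi p x) * (-y) + 2 * |y| ^ p := h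
      _ = |x| ^ p + p * phi p x * y + 2 * |y| ^ p := by ring

private lemma meas_abs_rpow {Ω : Type*} [MeasurableSpace Ω] {p : ℝ} (hp : 0 ≤ p)
    {f : Ω → ℝ} (hf : Measurable f) : Measurable (fun ω => |f ω| ^ p) :=
  ((continuous_abs.rpow_const fun _ => Or.inr hp).measurable).comp hf

private lemma abs_rpow_le {p : ℝ} (hp1 : 1 < p) (hp2 : p ≤ 2) (x : ℝ) :
    |x| ^ (p - 1) ≤ 1 + |x| := by
  rcases le_or_gt (|x|) 1 with h | h
  · have := Real.rpow_le_one (abs_nonneg x) h (by linarith : (0:ℝ) ≤ p - 1)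
    have h2 := abs_nonneg x
    linarith
  · have := Real.rpow_le_rpow_of_exponent_le h.le (by linarith : p - 1 ≤ 1)
    rw [Real.rpow_one] at this
    linarith

private lemma sum_moment_le {Ω : Type*} [MeasurableSpace Ω] (P : Measure Ω)
    [IsProbabilityMeasure P] {n : ℕ} {p : ℝ} (hp1 : 1 < p) (hp2 : p ≤ 2)
    (Y : Fin n → Ω → ℝ) (hYm : ∀ i, Measurable (Y i))
    (hYindep : iIndepFun Y P)
    (hYint : ∀ i, Integrable (Y i) P)
    (hYmean : ∀ i, ∫ ω, Y i ω ∂P = 0)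
    (hYp : ∀ i, Integrable (fun ω => |Y i ω| ^ p) P) (s : Finset (Fin n)) :
    Integrable (fun ω => |∑ i ∈ s, Y i ω| ^ p) P ∧
      ∫ ω, |∑ i ∈ s, Y i ω| ^ p ∂P ≤ 2 * ∑ i ∈ s, ∫ ω, |Y i ω| ^ p ∂P := by
  have hp0 : (0:ℝ) < p := lt_trans one_pos hp1
  induction s using Finset.induction with
  | empty =>
      constructor
      · simpa [Real.zero_rpow hp0.ne'] using integrable_const (0:ℝ) (μ := P)
      · simp [Real.zero_rpow hp0.ne']
  | insert j s hj ih =>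
      set S : Ω → ℝ := fun ω => ∑ i ∈ s, Y i ω with hS
      have hSm : Measurable S := Finset.measurable_sum s (fun i _ => hYm i)
      have hSint : Integrable S P := integrable_finset_sum s (fun i _ => hYint i)
      have hindep : IndepFun S (Y j) P := by
        have h := hYindep.indepFun_finset_sum_of_notMem hYm hj
        rwa [show (∑ i ∈ s, Y i) = S from funext fun ω => by simp [hS]] at h
      set Z : Ω → ℝ := fun ω => phi p (S ω) with hZ
      have hZm : Measurable Z := (phi_measurable hp1).comp hSm
      have hZint : Integrable Z P := by
        refine Integrable.mono' ((integrable_const 1).add hSint.abs)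
          hZm.aestronglyMeasurable (ae_of_all _ fun ω => ?_)
        simp only [Real.norm_eq_abs, Pi.add_apply]
        rw [phi_abs hp1]
        exact abs_rpow_le hp1 hp2 _
      have hindepZ : IndepFun Z (Y j) P := hindep.comp (phi_measurable hp1) measurable_id
      have hprod_int : Integrable (fun ω => Z ω * Y j ω) P :=
        hindepZ.integrable_mul hZint (hYint j)
      have hprod_zero : ∫ ω, Z ω * Y j ω ∂P = 0 := by
        have h : ∫ ω, Z ω * Y j ω ∂P = (∫ ω, Z ω ∂P) * ∫ ω, Y j ω ∂P :=
          hindepZ.integral_mul_eq_mul_integral hZm.aestronglyMeasurable (hYm j).aestronglyMeasurable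
        rw [h, hYmean j, mul_zero]
      have hbound : ∀ ω, |Y j ω + S ω| ^ p ≤ |S ω| ^ p + p * (Z ω * Y j ω) + 2 * |Y j ω| ^ p := by
        intro ω
        have := key hp1 hp2 (S ω) (Y j ω)
        rw [add_comm (S ω)] at this
        linarith [this]
      have hRHSint : Integrable
          (fun ω => |S ω| ^ p + p * (Z ω * Y j ω) + 2 * |Y j ω| ^ p) P :=
        (ih.1.add (hprod_int.const_mul p)).add ((hYp j).const_mul 2)
      have hLHSm : Measurable (fun ω => |Y j ω + S ω| ^ p) :=
        meas_abs_rpow hp0.le ((hYm j).add hSm)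
      have hLHSint : Integrable (fun ω => |Y j ω + S ω| ^ p) P := by
        refine Integrable.mono' hRHSint hLHSm.aestronglyMeasurable (ae_of_all _ fun ω => ?_)
        rw [Real.norm_eq_abs, abs_of_nonneg (Real.rpow_nonneg (abs_nonneg _) _)]
        exact hbound ω
      have hsum : ∀ ω, ∑ i ∈ insert j s, Y i ω = Y j ω + S ω := fun ω =>
        Finset.sum_insert hj
      constructor
      · simpa only [hsum] using hLHSint
      · calc ∫ ω, |∑ i ∈ insert j s, Y i ω| ^ p ∂P
            = ∫ ω, |Y j ω + S ω| ^ p ∂P := by simp only [hsum]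
          _ ≤ ∫ ω, (|S ω| ^ p + p * (Z ω * Y j ω) + 2 * |Y j ω| ^ p) ∂P :=
              integral_mono hLHSint hRHSint hbound
          _ = (∫ ω, |S ω| ^ p ∂P) + p * (∫ ω, Z ω * Y j ω ∂P)
              + 2 * ∫ ω, |Y j ω| ^ p ∂P := by
              have hint1 : Integrable (fun ω => |S ω| ^ p + p * (Z ω * Y j ω)) P :=
                ih.1.add (hprod_int.const_mul p)
              have e1 : ∫ ω, ((|S ω| ^ p + p * (Z ω * Y j ω)) + 2 * |Y j ω| ^ p) ∂P
                  = (∫ ω, (|S ω| ^ p + p * (Z ω * Y j ω)) ∂P) + ∫ ω, 2 * |Y j ω| ^ p ∂P :=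
                integral_add hint1 ((hYp j).const_mul 2)
              have e2 : ∫ ω, (|S ω| ^ p + p * (Z ω * Y j ω)) ∂P
                  = (∫ ω, |S ω| ^ p ∂P) + ∫ ω, p * (Z ω * Y j ω) ∂P :=
                integral_add ih.1 (hprod_int.const_mul p)
              rw [e1, e2, integral_const_mul, integral_const_mul]
          _ ≤ 2 * ∑ i ∈ s, (∫ ω, |Y i ω| ^ p ∂P) + 0 + 2 * ∫ ω, |Y j ω| ^ p ∂P := by
              rw [hprod_zero, mul_zero]
              have := ih.2
              linarith
          _ = 2 * ∑ i ∈ insert j s, ∫ ω, |Y i ω| ^ p ∂P := by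
              rw [Finset.sum_insert hj]
              ring


/-- Chebyshev-type one-sided bound for the empirical mean under a centered
`(1+a)`-moment bound. -/
theorem stmt5 {Ω : Type*} [MeasurableSpace Ω] (P : Measure Ω) [IsProbabilityMeasure P]
    (n : ℕ) (hn : 0 < n) (a M δ μ : ℝ) (ha : a ∈ Set.Ioc (0:ℝ) 1)
    (hδ : δ ∈ Set.Ioo (0:ℝ) 1)
    (X : Fin n → Ω → ℝ) (hXm : ∀ i, Measurable (X i))
    (hXindep : iIndepFun X P)
    (hXid : ∀ i j, Measure.map (X i) P = Measure.map (X j) P)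
    (hint : ∀ i, Integrable (X i) P)
    (hmean : ∀ i, ∫ ω, X i ω ∂P = μ)
    (hmomint : ∀ i, Integrable (fun ω => |X i ω - μ| ^ (1 + a)) P)
    (hmom : ∀ i, ∫ ω, |X i ω - μ| ^ (1 + a) ∂P ≤ M) :
    ENNReal.ofReal (1 - δ)
      ≤ P {ω | (n : ℝ)⁻¹ * ∑ i, X i ω ≤ μ + (3 * M / (δ * (n : ℝ) ^ a)) ^ (1 / (1 + a))} := by
  obtain ⟨ha0, ha1⟩ := ha
  obtain ⟨hδ0, hδ1⟩ := hδ
  have hp1 : (1:ℝ) < 1 + a := by linarith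
  have hp2 : (1:ℝ) + a ≤ 2 := by linarith
  have hp0 : (0:ℝ) < 1 + a := by linarith
  have hnR : (0:ℝ) < n := Nat.cast_pos.mpr hn
  have hna : (0:ℝ) < (n:ℝ) ^ a := Real.rpow_pos_of_pos hnR a
  set Y : Fin n → Ω → ℝ := fun i ω => X i ω - μ with hYdef
  have hYm : ∀ i, Measurable (Y i) := fun i => (hXm i).sub_const μ
  have hYindep : iIndepFun Y P :=
    hXindep.comp (fun _ x => x - μ) (fun _ => measurable_id.sub_const μ)
  have hYint : ∀ i, Integrable (Y i) P := fun i => (hint i).sub (integrable_const μ)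
  have hYmean : ∀ i, ∫ ω, Y i ω ∂P = 0 := by
    intro i
    rw [hYdef]
    rw [integral_sub (hint i) (integrable_const μ), hmean i, integral_const]
    simp
  have hYp : ∀ i, Integrable (fun ω => |Y i ω| ^ (1 + a)) P := fun i => hmomint i
  have hYmom : ∀ i, ∫ ω, |Y i ω| ^ (1 + a) ∂P ≤ M := fun i => hmom i
  have hM0 : 0 ≤ M := by
    have h1 := hmom ⟨0, hn⟩
    have h2 : 0 ≤ ∫ ω, |X ⟨0, hn⟩ ω - μ| ^ (1 + a) ∂P :=
      integral_nonneg fun ω => Real.rpow_nonneg (abs_nonneg _) _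
    linarith
  set T : Set Ω :=
    {ω | (n : ℝ)⁻¹ * ∑ i, X i ω ≤ μ + (3 * M / (δ * (n : ℝ) ^ a)) ^ (1 / (1 + a))} with hT
  rcases eq_or_lt_of_le hM0 with hM | hM
  · -- M = 0 : all X i = μ a.e.
    have hae : ∀ᵐ ω ∂P, ∀ i, X i ω = μ := by
      rw [ae_all_iff]
      intro i
      have hz : ∫ ω, |Y i ω| ^ (1 + a) ∂P = 0 := by
        have := hYmom i
        have h2 : 0 ≤ ∫ ω, |Y i ω| ^ (1 + a) ∂P :=
          integral_nonneg fun ω => Real.rpow_nonneg (abs_nonneg _) _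
        linarith [hM.symm ▸ this]
      have := (integral_eq_zero_iff_of_nonneg
        (fun ω => Real.rpow_nonneg (abs_nonneg _) _) (hYp i)).mp hz
      filter_upwards [this] with ω hω
      simp only [Pi.zero_apply] at hω
      have habs : |Y i ω| = 0 := by
        by_contra hne
        have : (0:ℝ) < |Y i ω| := lt_of_le_of_ne (abs_nonneg _) (Ne.symm hne)
        exact absurd hω (ne_of_gt (Real.rpow_pos_of_pos this _))
      have : Y i ω = 0 := abs_eq_zero.mp habs
      simp only [hYdef] at this
      linarith
    have hsub : ∀ᵐ ω ∂P, ω ∈ T := by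
      filter_upwards [hae] with ω hω
      simp only [hT, Set.mem_setOf_eq]
      have hsum : ∑ i, X i ω = n * μ := by
        rw [Finset.sum_congr rfl fun i _ => hω i]
        simp [mul_comm]
      rw [hsum, ← mul_assoc, inv_mul_cancel₀ hnR.ne', one_mul]
      have : (0:ℝ) ≤ (3 * M / (δ * (n:ℝ) ^ a)) ^ (1 / (1 + a)) :=
        Real.rpow_nonneg (by positivity) _
      linarith
    have hone : (1:ℝ≥0∞) ≤ P T := by
      have hcompl : P {ω | ¬ ω ∈ T} = 0 := hsub
      calc (1:ℝ≥0∞) = P Set.univ := (measure_univ).symm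
        _ = P (T ∪ {ω | ¬ ω ∈ T}) := by
            congr 1
            ext ω
            by_cases h : ω ∈ T <;> simp [h]
        _ ≤ P T + P {ω | ¬ ω ∈ T} := measure_union_le _ _
        _ = P T := by rw [hcompl, add_zero]
    calc ENNReal.ofReal (1 - δ) ≤ 1 := ENNReal.ofReal_le_one.mpr (by linarith)
      _ ≤ P T := hone
  · -- M > 0
    set t : ℝ := (3 * M / (δ * (n:ℝ) ^ a)) ^ (1 / (1 + a)) with htdef
    have hbase : (0:ℝ) < 3 * M / (δ * (n:ℝ) ^ a) := by positivity
    have ht : 0 < t := Real.rpow_pos_of_pos hbase _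
    have htp : t ^ (1 + a) = 3 * M / (δ * (n:ℝ) ^ a) := by
      rw [htdef, ← Real.rpow_mul hbase.le, one_div_mul_cancel hp0.ne', Real.rpow_one]
    have hmoment := sum_moment_le P hp1 hp2 Y hYm hYindep hYint hYmean hYp Finset.univ
    have hsumM : ∫ ω, |∑ i, Y i ω| ^ (1 + a) ∂P ≤ 2 * n * M := by
      refine le_trans hmoment.2 ?_
      have : ∑ i : Fin n, ∫ ω, |Y i ω| ^ (1 + a) ∂P ≤ ∑ _i : Fin n, M :=
        Finset.sum_le_sum fun i _ => hYmom i
      simp only [Finset.sum_const, Finset.card_univ, Fintype.card_fin, nsmul_eq_mul] at this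
      nlinarith
    have hεp : ((n:ℝ) * t) ^ (1 + a) = 3 * n * M / δ := by
      rw [Real.mul_rpow hnR.le ht.le, htp, Real.rpow_add hnR 1 a, Real.rpow_one]
      field_simp
    set A : Set Ω := {ω | ((n:ℝ) * t) ^ (1 + a) ≤ |∑ i, Y i ω| ^ (1 + a)} with hA
    have hmarkov := mul_meas_ge_le_integral_of_nonneg
      (ae_of_all P fun ω => Real.rpow_nonneg (abs_nonneg _) _) hmoment.1 (((n:ℝ) * t) ^ (1 + a))
    have hPA : (P A).toReal ≤ 2 * δ / 3 := by
      have hεpos : (0:ℝ) < 3 * n * M / δ := by positivity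
      have h1 : (3 * n * M / δ) * (P A).toReal ≤ 2 * n * M := by
        rw [← hεp]
        exact le_trans hmarkov hsumM
      rw [div_mul_eq_mul_div, div_le_iff₀ hδ0] at h1
      have hnM : (0:ℝ) < n * M := by positivity
      nlinarith
    have hPA' : P A ≤ ENNReal.ofReal (2 * δ / 3) := by
      rw [ENNReal.le_ofReal_iff_toReal_le (measure_ne_top P A) (by positivity)]
      exact hPA
    set bad : Set Ω := {ω | (n:ℝ) * t < ∑ i, Y i ω} with hbad
    have hbadA : bad ⊆ A := by
      intro ω hω
      simp only [hbad, Set.mem_setOf_eq] at hω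
      simp only [hA, Set.mem_setOf_eq]
      refine Real.rpow_le_rpow (by positivity) ?_ hp0.le
      exact le_trans hω.le (le_abs_self _)
    have hgood : {ω | ∑ i, Y i ω ≤ (n:ℝ) * t} ⊆ T := by
      intro ω hω
      simp only [Set.mem_setOf_eq] at hω
      simp only [hT, Set.mem_setOf_eq]
      have hsum : ∑ i, X i ω = (∑ i, Y i ω) + n * μ := by
        simp only [hYdef]
        rw [Finset.sum_sub_distrib]
        simp [mul_comm]
      rw [hsum]
      have : (n:ℝ)⁻¹ * ((∑ i, Y i ω) + n * μ) ≤ (n:ℝ)⁻¹ * ((n:ℝ) * t + n * μ) := by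
        apply mul_le_mul_of_nonneg_left _ (by positivity)
        linarith
      refine le_trans this ?_
      rw [mul_add, ← mul_assoc, ← mul_assoc, inv_mul_cancel₀ hnR.ne', one_mul, one_mul]
      linarith
    have hcover : (1:ℝ≥0∞) ≤ P {ω | ∑ i, Y i ω ≤ (n:ℝ) * t} + P bad := by
      calc (1:ℝ≥0∞) = P Set.univ := (measure_univ).symm
        _ = P ({ω | ∑ i, Y i ω ≤ (n:ℝ) * t} ∪ bad) := by
            congr 1
            ext ω
            simp only [Set.mem_univ, Set.mem_union, Set.mem_setOf_eq, hbad, true_iff]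
            exact le_or_gt _ _
        _ ≤ _ := measure_union_le _ _
    have step1 : ENNReal.ofReal (1 - δ) ≤ 1 - ENNReal.ofReal (2 * δ / 3) := by
      rw [← ENNReal.ofReal_one, ← ENNReal.ofReal_sub _ (by positivity)]
      exact ENNReal.ofReal_le_ofReal (by linarith)
    have step2 : (1:ℝ≥0∞) - ENNReal.ofReal (2 * δ / 3) ≤ 1 - P bad :=
      tsub_le_tsub_left (le_trans (measure_mono hbadA) hPA') 1
    have step3 : (1:ℝ≥0∞) - P bad ≤ P {ω | ∑ i, Y i ω ≤ (n:ℝ) * t} :=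
      tsub_le_iff_right.mpr hcover
    exact le_trans step1 (le_trans step2 (le_trans step3 (measure_mono hgood)))
end

section
/- Under assumptions A1 (i.i.d. sample) and A2 (distribution symmetric about μ), the one-sided RMM test with parameters r, m (rational level p = r/m) satisfies P(R(μ) > m - r) = r/m, where R(μ) = 1 + ∑_{j=1}^{m-1} 1(S₀(μ) ≺_π S_j(μ)), the S_j are MoM statistics of the original and m-1 sign-randomized samples centered at μ, and ≺_π breaks ties with an independent uniform random permutation π. -/
open MeasureTheory ProbabilityTheory
open scoped ENNReal Classical

/-- Empirical median of a list: the element of the sorted list at (0-based) index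
`(length - 1) / 2`. -/
noncomputable def medList {α : Type*} [LinearOrder α] (d : α) (l : List α) : α :=
  (l.mergeSort (fun x y => decide (x ≤ y))).getD ((l.length - 1) / 2) d

instance permMeasurableSpace (m : ℕ) : MeasurableSpace (Equiv.Perm (Fin m)) := ⊤


/-- In a `≤`-sorted list, the `idx`-th entry is `≤ c` iff more than `idx` entries are `≤ c`. -/
theorem sorted_getD_le_iff {l : List ℝ} (hs : l.Pairwise (· ≤ ·)) {idx : ℕ}
    (hidx : idx < l.length) (c d : ℝ) :
    l.getD idx d ≤ c ↔ idx < l.countP (fun x => decide (x ≤ c)) := by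
  induction l generalizing idx with
  | nil => simp at hidx
  | cons a t ih =>
    rcases List.pairwise_cons.mp hs with ⟨ha, ht⟩
    cases idx with
    | zero =>
      simp only [List.getD_cons_zero, List.countP_cons]
      constructor
      · intro h
        have hd : decide (a ≤ c) = true := by simpa using h
        simp [hd]
      · intro h
        by_contra hac
        have h1 : t.countP (fun x => decide (x ≤ c)) = 0 := by
          rw [List.countP_eq_zero]
          intro x hx
          simp only [decide_eq_true_eq]
          intro hxc
          exact hac (le_trans (ha x hx) hxc)
        simp [h1, hac] at h
    | succ idx =>
      simp only [List.getD_cons_succ, List.countP_cons]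
      have hidx' : idx < t.length := by simpa using hidx
      rw [ih ht hidx']
      by_cases hac : a ≤ c
      · simp [hac]
      · have h1 : t.countP (fun x => decide (x ≤ c)) = 0 := by
          rw [List.countP_eq_zero]
          intro x hx
          simp only [decide_eq_true_eq]
          intro hxc
          exact hac (le_trans (ha x hx) hxc)
        have h2 : ¬ (t.getD idx d ≤ c) := by
          intro h
          have := (ih ht hidx' ).mp h
          omega
        simp [h1, hac, h2]

theorem countP_ofFn {k : ℕ} (w : Fin k → ℝ) (p : ℝ → Bool) :
    (List.ofFn w).countP p = ∑ i : Fin k, if p (w i) then 1 else 0 := by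
  induction k with
  | zero => simp
  | succ k ih =>
    rw [List.ofFn_succ, List.countP_cons, Fin.sum_univ_succ, ih]
    by_cases h : p (w 0) <;> simp [h] <;> omega

theorem measurable_medList_ofFn {k : ℕ} (d : ℝ) :
    Measurable fun w : Fin k → ℝ => medList d (List.ofFn w) := by
  rcases Nat.eq_zero_or_pos k with hk | hk
  · subst hk
    have : ∀ w : Fin 0 → ℝ, medList d (List.ofFn w) = d := by
      intro w
      simp [medList, List.ofFn_zero]
    simp only [this]
    exact measurable_const
  apply measurable_of_Iic
  intro c
  have hset : (fun w : Fin k → ℝ => medList d (List.ofFn w)) ⁻¹' Set.Iic c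
      = {w : Fin k → ℝ | ((k - 1) / 2 : ℕ) < ∑ i : Fin k, if w i ≤ c then 1 else 0} := by
    ext w
    have hlen : (List.ofFn w).length = k := by simp
    have hslen : ((List.ofFn w).mergeSort (fun x y => decide (x ≤ y))).length = k := by
      rw [((List.ofFn w).mergeSort_perm _).length_eq, hlen]
    have hsorted : ((List.ofFn w).mergeSort (fun x y => decide (x ≤ y))).Pairwise (· ≤ ·) := by
      have := List.pairwise_mergeSort (le := fun x y : ℝ => decide (x ≤ y))
        (fun a b c hab hbc => by simp only [decide_eq_true_eq] at *; exact le_trans hab hbc)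
        (fun a b => by simp only [Bool.or_eq_true, decide_eq_true_eq]; exact le_total a b)
        (List.ofFn w)
      exact this.imp (fun h => by simpa using h)
    have hidx : (k - 1) / 2 < ((List.ofFn w).mergeSort (fun x y => decide (x ≤ y))).length := by
      rw [hslen]; omega
    simp only [Set.mem_preimage, Set.mem_Iic, Set.mem_setOf_eq, medList, hlen]
    rw [sorted_getD_le_iff hsorted hidx c d,
      ((List.ofFn w).mergeSort_perm _).countP_eq, countP_ofFn]
    simp only [decide_eq_true_eq]
  rw [hset]
  have hmeas : Measurable fun w : Fin k → ℝ => ∑ i : Fin k, if w i ≤ c then (1:ℕ) else 0 :=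
    Finset.measurable_sum _ fun i _ =>
      Measurable.ite (measurableSet_le (measurable_pi_apply i) measurable_const)
        measurable_const measurable_const
  exact hmeas MeasurableSpace.measurableSet_top


theorem rank_count {m r : ℕ} (hm : 0 < m) (hr : 1 ≤ r) (hrm : r ≤ m) {κ : Type*} [LinearOrder κ]
    (key : Fin m → κ) (hinj : Function.Injective key) :
    (Finset.univ.filter fun a : Fin m =>
      m - r < 1 + (Finset.univ.filter fun j => key a < key j).card).card = r := by
  set c : Fin m → ℕ := fun a => (Finset.univ.filter fun j => key a < key j).card with hc
  have haux : ∀ a b : Fin m, key a < key b → c b < c a := by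
    intro a b hab
    apply Finset.card_lt_card
    constructor
    · intro j hj
      simp only [Finset.mem_filter, Finset.mem_univ, true_and] at *
      exact lt_trans hab hj
    · intro hsub
      have : b ∈ Finset.univ.filter fun j => key a < key j := by
        simp [hab]
      have hb := hsub this
      simp at hb
  have hcinj : Function.Injective c := by
    intro a b hab
    by_contra hne
    rcases lt_trichotomy (key a) (key b) with h | h | h
    · exact absurd hab (by have := haux a b h; omega)
    · exact hne (hinj h)
    · exact absurd hab (by have := haux b a h; omega)
  have hlt : ∀ a, c a < m := by
    intro a
    show (Finset.univ.filter fun j => key a < key j).card < m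
    have hsub : (Finset.univ.filter fun j => key a < key j) ⊆ Finset.univ.erase a := by
      intro j hj
      simp only [Finset.mem_filter, Finset.mem_univ, true_and] at hj
      simp only [Finset.mem_erase, Finset.mem_univ, and_true]
      intro h; subst h; exact lt_irrefl _ hj
    have := Finset.card_le_card hsub
    rw [Finset.card_erase_of_mem (Finset.mem_univ a), Finset.card_univ, Fintype.card_fin] at this
    omega
  set e : Fin m → Fin m := fun a => ⟨c a, hlt a⟩ with he
  have heinj : Function.Injective e := by
    intro a b hab
    exact hcinj (by simpa [he, Fin.ext_iff] using hab)
  have hebij : Function.Bijective e := (Finite.injective_iff_bijective).mp heinj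
  have hcard : (Finset.univ.filter fun a : Fin m => m - r ≤ (e a : ℕ)).card
      = (Finset.univ.filter fun v : Fin m => m - r ≤ (v : ℕ)).card := by
    apply Finset.card_bij (fun a _ => e a)
    · intro a ha
      simp only [Finset.mem_filter, Finset.mem_univ, true_and] at *
      exact ha
    · intro a _ b _ hab
      exact heinj hab
    · intro v hv
      obtain ⟨a, rfl⟩ := hebij.surjective v
      simp only [Finset.mem_filter, Finset.mem_univ, true_and] at hv
      refine ⟨a, Finset.mem_filter.mpr ⟨Finset.mem_univ _, ?_⟩, rfl⟩
      simpa [he] using hv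
  have hfin : (Finset.univ.filter fun v : Fin m => m - r ≤ (v : ℕ)).card = r := by
    have h1 : (Finset.univ.filter fun v : Fin m => m - r ≤ (v : ℕ))
        = Finset.Ici (⟨m - r, by omega⟩ : Fin m) := by
      ext v
      simp [Finset.mem_Ici, Fin.le_def]
    rw [h1, Fin.card_Ici]
    show m - (m - r) = r
    omega
  calc (Finset.univ.filter fun a : Fin m => m - r < 1 + c a).card
      = (Finset.univ.filter fun a : Fin m => m - r ≤ (e a : ℕ)).card := by
        congr 1
        apply Finset.filter_congr
        intro a _
        have : ((e a : ℕ)) = c a := rfl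
        rw [this]
        omega
    _ = r := by rw [hcard, hfin]

open MeasureTheory ProbabilityTheory
open scoped ENNReal Classical


noncomputable section SignCore

variable {n m : ℕ}

/-- Rademacher measure on ℝ. -/
def radM : Measure ℝ := (2⁻¹ : ℝ≥0∞) • Measure.dirac (1:ℝ) + (2⁻¹ : ℝ≥0∞) • Measure.dirac (-1:ℝ)

instance : IsProbabilityMeasure radM := by
  constructor
  simp [radM, ENNReal.inv_two_add_inv_two]

/-- The per-coordinate sign measures: point mass at `1` in the distinguished column `z0`,
Rademacher elsewhere. -/
def sgnM (z0 : Fin m) : Fin n × Fin m → Measure ℝ := fun p => if p.2 = z0 then Measure.dirac 1 else radM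

instance (z0 : Fin m) (p : Fin n × Fin m) : IsProbabilityMeasure (sgnM z0 p) := by
  unfold sgnM
  split <;> infer_instance

/-- The finite set of sign matrices. -/
def SMset (n m : ℕ) (z0 : Fin m) : Finset (Fin n × Fin m → ℝ) :=
  Fintype.piFinset fun p => if p.2 = z0 then ({1} : Finset ℝ) else {1, -1}

def cSM (n m : ℕ) (z0 : Fin m) : ℝ≥0∞ :=
  ∏ p : Fin n × Fin m, if p.2 = z0 then 1 else 2⁻¹

lemma cSM_ne_top (z0 : Fin m) : cSM n m z0 ≠ ∞ := by
  refine ENNReal.prod_ne_top fun p _ => ?_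
  split <;> simp

lemma SM_mem_cases {z0 : Fin m} {s : Fin n × Fin m → ℝ} (hs : s ∈ SMset n m z0)
    (p : Fin n × Fin m) : s p = 1 ∨ s p = -1 := by
  rw [SMset, Fintype.mem_piFinset] at hs
  have := hs p
  split at this <;> simp_all

lemma SM_mem_z0 {z0 : Fin m} {s : Fin n × Fin m → ℝ} (hs : s ∈ SMset n m z0)
    (i : Fin n) : s (i, z0) = 1 := by
  rw [SMset, Fintype.mem_piFinset] at hs
  have := hs (i, z0)
  simp at this
  exact this

lemma SM_sq {z0 : Fin m} {s : Fin n × Fin m → ℝ} (hs : s ∈ SMset n m z0)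
    (p : Fin n × Fin m) : s p * s p = 1 := by
  rcases SM_mem_cases hs p with h | h <;> rw [h] <;> ring

/-- The product sign measure equals a uniform combination of Dirac masses. -/
lemma pi_sgnM_eq_sum (z0 : Fin m) :
    Measure.pi (sgnM (n := n) z0) = cSM n m z0 • (SMset n m z0).sum (fun s => Measure.dirac s) := by
  refine Measure.pi_eq fun A hA => ?_
  have hbox : MeasurableSet (Set.univ.pi A) := MeasurableSet.univ_pi hA
  rw [Measure.smul_apply, Measure.finset_sum_apply]
  have hd : ∀ s : Fin n × Fin m → ℝ, Measure.dirac s (Set.univ.pi A)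
      = ∏ p : Fin n × Fin m, (if s p ∈ A p then (1:ℝ≥0∞) else 0) := by
    intro s
    rw [Measure.dirac_apply' _ hbox]
    by_cases h : s ∈ Set.univ.pi A
    · rw [Set.indicator_of_mem h]
      rw [Set.mem_univ_pi] at h
      simp only [Pi.one_apply]
      rw [Finset.prod_congr rfl fun p _ => if_pos (h p)]
      simp
    · rw [Set.indicator_of_notMem h]
      rw [Set.mem_univ_pi] at h
      push_neg at h
      obtain ⟨p, hp⟩ := h
      exact (Finset.prod_eq_zero (Finset.mem_univ p) (if_neg hp : (if s p ∈ A p then (1:ℝ≥0∞) else 0) = 0)).symm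
  calc cSM n m z0 • ∑ s ∈ SMset n m z0, Measure.dirac s (Set.univ.pi A)
      = cSM n m z0 * ∑ s ∈ SMset n m z0, ∏ p : Fin n × Fin m,
          (if s p ∈ A p then (1:ℝ≥0∞) else 0) := by
        rw [smul_eq_mul]
        congr 1
        exact Finset.sum_congr rfl fun s _ => hd s
    _ = cSM n m z0 * ∏ p : Fin n × Fin m, ∑ v ∈ (if p.2 = z0 then ({1} : Finset ℝ) else {1,-1}),
          (if v ∈ A p then (1:ℝ≥0∞) else 0) := by
        rw [Finset.prod_univ_sum]
        rfl
    _ = ∏ p : Fin n × Fin m, ((if p.2 = z0 then 1 else 2⁻¹) * ∑ v ∈ (if p.2 = z0 then ({1} : Finset ℝ) else {1,-1}),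
          (if v ∈ A p then (1:ℝ≥0∞) else 0)) := by
        rw [cSM, ← Finset.prod_mul_distrib]
    _ = ∏ p : Fin n × Fin m, sgnM z0 p (A p) := by
        refine Finset.prod_congr rfl fun p _ => ?_
        by_cases h : p.2 = z0
        · simp only [h, sgnM, eq_self_iff_true, if_true, one_mul]
          rw [Finset.sum_singleton, Measure.dirac_apply' _ (hA p)]
          by_cases h1 : (1:ℝ) ∈ A p <;> simp [h1]
        · simp only [sgnM, if_neg h]
          rw [Finset.sum_insert (by norm_num), Finset.sum_singleton]
          rw [radM, Measure.add_apply, Measure.smul_apply, Measure.smul_apply,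
            Measure.dirac_apply' _ (hA p), Measure.dirac_apply' _ (hA p)]
          by_cases h1 : (1:ℝ) ∈ A p <;> by_cases h2 : (-1:ℝ) ∈ A p <;>
            simp [h1, h2, mul_add]

/-- Coordinatewise measure-preserving maps preserve `Measure.pi`. -/
lemma pi_map_eq {ξ : Fin n → Measure ℝ} [∀ i, IsProbabilityMeasure (ξ i)]
    (g : Fin n → ℝ → ℝ) (hgm : ∀ i, Measurable (g i))
    (hg : ∀ i, (ξ i).map (g i) = ξ i) :
    (Measure.pi ξ).map (fun x i => g i (x i)) = Measure.pi ξ := by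
  have hGm : Measurable fun (x : Fin n → ℝ) i => g i (x i) :=
    measurable_pi_lambda _ fun i => (hgm i).comp (measurable_pi_apply i)
  refine ((Measure.pi_eq fun A hA => ?_)).symm
  rw [Measure.map_apply hGm (MeasurableSet.univ_pi hA)]
  have hpre : (fun (x : Fin n → ℝ) i => g i (x i)) ⁻¹' (Set.univ.pi A)
      = Set.univ.pi (fun i => g i ⁻¹' A i) := by
    ext x
    simp [Set.mem_univ_pi]
  rw [hpre, Measure.pi_pi]
  refine Finset.prod_congr rfl fun i _ => ?_
  rw [← Measure.map_apply (hgm i) (hA i), hg i]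

end SignCore

noncomputable section SignPerm

variable {n m : ℕ} (z0 : Fin m) (μ : ℝ)

/-- The sign-multiplication map producing the randomized centered data matrix,
with columns relabeled by `σ`. -/
def Fmap (μ : ℝ) (σ : Equiv.Perm (Fin m)) :
    (Fin n → ℝ) × (Fin n × Fin m → ℝ) → (Fin n × Fin m → ℝ) :=
  fun xa p => xa.2 (p.1, σ p.2) * (xa.1 p.1 - μ)

lemma measurable_Fmap (σ : Equiv.Perm (Fin m)) : Measurable (Fmap (n := n) μ σ) :=
  measurable_pi_lambda _ fun p =>
    (((measurable_pi_apply _).comp measurable_snd).mul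
      (((measurable_pi_apply _).comp measurable_fst).sub measurable_const))

def sprm (σ : Equiv.Perm (Fin m)) (s : Fin n × Fin m → ℝ) : Fin n × Fin m → ℝ :=
  fun p => s (p.1, σ p.2) * s (p.1, σ z0)

lemma sprm_mem {σ : Equiv.Perm (Fin m)} {s : Fin n × Fin m → ℝ}
    (hs : s ∈ SMset n m z0) : sprm z0 σ s ∈ SMset n m z0 := by
  rw [SMset, Fintype.mem_piFinset]
  intro p
  by_cases h : p.2 = z0
  · rw [if_pos h]
    have : sprm z0 σ s p = 1 := by
      rw [sprm]
      rw [h]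
      exact SM_sq hs _
    simp [this]
  · rw [if_neg h]
    rcases SM_mem_cases hs (p.1, σ p.2) with h1 | h1 <;>
      rcases SM_mem_cases hs (p.1, σ z0) with h2 | h2 <;>
      simp [sprm, h1, h2]

lemma sprm_sprm {σ : Equiv.Perm (Fin m)} {s : Fin n × Fin m → ℝ}
    (hs : s ∈ SMset n m z0) : sprm z0 σ.symm (sprm z0 σ s) = s := by
  funext p
  show (sprm z0 σ s) (p.1, σ.symm p.2) * (sprm z0 σ s) (p.1, σ.symm z0) = s p
  rw [sprm, sprm]
  simp only [Equiv.apply_symm_apply]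
  have h1 : s (p.1, z0) = 1 := SM_mem_z0 hs p.1
  have h2 : s (p.1, σ z0) * s (p.1, σ z0) = 1 := SM_sq hs _
  calc s (p.1, p.2) * s (p.1, σ z0) * (s (p.1, z0) * s (p.1, σ z0))
      = s (p.1, p.2) * s (p.1, z0) * (s (p.1, σ z0) * s (p.1, σ z0)) := by ring
    _ = s p := by rw [h1, h2]; simp

lemma sprm_sprm' {σ : Equiv.Perm (Fin m)} {t : Fin n × Fin m → ℝ}
    (ht : t ∈ SMset n m z0) : sprm z0 σ (sprm z0 σ.symm t) = t := by
  have := sprm_sprm (σ := σ.symm) z0 ht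
  simpa using this

variable (ξ : Fin n → Measure ℝ) [∀ i, IsProbabilityMeasure (ξ i)]

lemma map_Fmap_apply (σ : Equiv.Perm (Fin m)) {A : Set (Fin n × Fin m → ℝ)}
    (hA : MeasurableSet A) :
    ((Measure.pi ξ).prod (Measure.pi (sgnM (n := n) z0))).map (Fmap μ σ) A
      = cSM n m z0 * ∑ s ∈ SMset n m z0, (Measure.pi ξ) {x | Fmap μ σ (x, s) ∈ A} := by
  have hFm := measurable_Fmap (n := n) μ σ
  rw [Measure.map_apply hFm hA, Measure.prod_apply (hFm hA)]
  have hin : ∀ x : Fin n → ℝ, (Measure.pi (sgnM (n := n) z0)) (Prod.mk x ⁻¹' (Fmap μ σ ⁻¹' A))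
      = cSM n m z0 * ∑ s ∈ SMset n m z0,
          Set.indicator {x' : Fin n → ℝ | Fmap μ σ (x', s) ∈ A} (fun _ => (1:ℝ≥0∞)) x := by
    intro x
    rw [pi_sgnM_eq_sum, Measure.smul_apply, Measure.finset_sum_apply, smul_eq_mul]
    congr 1
    refine Finset.sum_congr rfl fun s _ => ?_
    have hmeas : MeasurableSet (Prod.mk x ⁻¹' (Fmap μ σ ⁻¹' A)) :=
      measurable_prodMk_left (hFm hA)
    rw [Measure.dirac_apply' _ hmeas]
    by_cases h : Fmap μ σ (x, s) ∈ A
    · rw [Set.indicator_of_mem (by exact h), Set.indicator_of_mem (by exact h)]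
      rfl
    · rw [Set.indicator_of_notMem (by exact h), Set.indicator_of_notMem (by exact h)]
  rw [lintegral_congr hin]
  have hUmeas : ∀ s : Fin n × Fin m → ℝ,
      MeasurableSet {x' : Fin n → ℝ | Fmap μ σ (x', s) ∈ A} := by
    intro s
    have : Measurable fun x' : Fin n → ℝ => Fmap μ σ (x', s) :=
      hFm.comp (measurable_id.prodMk measurable_const)
    exact this hA
  rw [lintegral_const_mul' _ _ (cSM_ne_top z0)]
  congr 1
  rw [lintegral_finset_sum _ fun s _ => (measurable_const.indicator (hUmeas s))]
  refine Finset.sum_congr rfl fun s _ => ?_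
  rw [lintegral_indicator (hUmeas s)]
  simp

lemma map_Fmap_perm (hξsym : ∀ i, (ξ i).map (fun z => 2*μ - z) = ξ i)
    (σ : Equiv.Perm (Fin m)) :
    ((Measure.pi ξ).prod (Measure.pi (sgnM (n := n) z0))).map (Fmap μ σ)
      = ((Measure.pi ξ).prod (Measure.pi (sgnM (n := n) z0))).map (Fmap μ 1) := by
  ext A hA
  rw [map_Fmap_apply z0 μ ξ σ hA, map_Fmap_apply z0 μ ξ 1 hA]
  congr 1
  refine Finset.sum_nbij' (fun s => sprm z0 σ s) (fun t => sprm z0 σ.symm t)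
    (fun s hs => sprm_mem z0 hs) (fun t ht => sprm_mem z0 ht)
    (fun s hs => sprm_sprm z0 hs) (fun t ht => sprm_sprm' z0 ht) ?_
  intro s hs
  -- the coordinatewise sign-flip map on the data
  set g : Fin n → ℝ → ℝ := fun i z => s (i, σ z0) * (z - μ) + μ with hgdef
  have hgm : ∀ i, Measurable (g i) :=
    fun i => (measurable_const.mul (measurable_id.sub measurable_const)).add measurable_const
  have hgp : ∀ i, (ξ i).map (g i) = ξ i := by
    intro i
    rcases SM_mem_cases hs (i, σ z0) with h | h
    · have : g i = id := by funext z; simp [hgdef, h]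
      rw [this, Measure.map_id]
    · have : g i = fun z => 2*μ - z := by funext z; rw [hgdef]; simp [h]; ring
      rw [this, hξsym i]
  have hkey : {x : Fin n → ℝ | Fmap μ σ (x, s) ∈ A}
      = (fun x i => g i (x i)) ⁻¹' {x : Fin n → ℝ | Fmap μ 1 (x, sprm z0 σ s) ∈ A} := by
    ext x
    simp only [Set.mem_preimage, Set.mem_setOf_eq]
    have : Fmap μ 1 ((fun i => g i (x i)), sprm z0 σ s) = Fmap μ σ (x, s) := by
      funext p
      show sprm z0 σ s (p.1, (1 : Equiv.Perm (Fin m)) p.2) * (g p.1 (x p.1) - μ)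
        = s (p.1, σ p.2) * (x p.1 - μ)
      rw [Equiv.Perm.one_apply, sprm, hgdef]
      have h2 : s (p.1, σ z0) * s (p.1, σ z0) = 1 := SM_sq hs _
      calc s (p.1, σ p.2) * s (p.1, σ z0) * (s (p.1, σ z0) * (x p.1 - μ) + μ - μ)
          = s (p.1, σ p.2) * (s (p.1, σ z0) * s (p.1, σ z0)) * (x p.1 - μ) := by ring
        _ = s (p.1, σ p.2) * (x p.1 - μ) := by rw [h2]; ring
    rw [this]
  have hU1 : MeasurableSet {x : Fin n → ℝ | Fmap μ 1 (x, sprm z0 σ s) ∈ A} := by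
    have : Measurable fun x' : Fin n → ℝ => Fmap μ 1 (x', sprm z0 σ s) :=
      (measurable_Fmap (n := n) μ 1).comp (measurable_id.prodMk measurable_const)
    exact this hA
  rw [hkey, ← Measure.map_apply (f := fun (x : Fin n → ℝ) (i : Fin n) => g i (x i))
    (measurable_pi_lambda _ fun i => (hgm i).comp (measurable_pi_apply i)) hU1,
    pi_map_eq g hgm hgp]

end SignPerm

section Helpers

open Finset

lemma card_filter_perm {γ : Type*} [Fintype γ] (σ : Equiv.Perm γ) (Q : γ → Prop)
    [DecidablePred Q] [DecidablePred fun j => Q (σ j)] :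
    (Finset.univ.filter fun j => Q (σ j)).card = (Finset.univ.filter Q).card := by
  apply Finset.card_bij (fun j _ => σ j)
  · intro j hj
    simp only [Finset.mem_filter, Finset.mem_univ, true_and] at *
    exact hj
  · intro a _ b _ hab
    exact σ.injective hab
  · intro t ht
    simp only [Finset.mem_filter, Finset.mem_univ, true_and] at ht
    exact ⟨σ.symm t, by simp [ht], by simp⟩

lemma measurable_of_top_dom {γ δ : Type*} [MeasurableSpace δ]
    (f : γ → δ) : @Measurable γ δ ⊤ _ f := fun _ _ => MeasurableSpace.measurableSet_top

lemma perm_uniform_apply {m : ℕ} (ρ : Measure (Equiv.Perm (Fin m)))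
    (hρ : ∀ q : Equiv.Perm (Fin m), ρ {q} = (Fintype.card (Equiv.Perm (Fin m)) : ℝ≥0∞)⁻¹)
    (T : Set (Equiv.Perm (Fin m))) :
    ρ T = (T.toFinset.card : ℝ≥0∞) * (Fintype.card (Equiv.Perm (Fin m)) : ℝ≥0∞)⁻¹ := by
  have hT : T = ⋃ q ∈ T.toFinset, ({q} : Set (Equiv.Perm (Fin m))) := by
    ext q
    simp [Set.mem_toFinset]
  rw [hT, measure_biUnion_finset ?_ (fun _ _ => MeasurableSpace.measurableSet_top)]
  · rw [Finset.sum_congr rfl fun q _ => hρ q]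
    simp [mul_comm]
  · intro a _ b _ hab
    simp [Function.onFun, Set.disjoint_singleton, hab]

lemma perm_uniform_map {m : ℕ} (ρ : Measure (Equiv.Perm (Fin m)))
    (hρ : ∀ q : Equiv.Perm (Fin m), ρ {q} = (Fintype.card (Equiv.Perm (Fin m)) : ℝ≥0∞)⁻¹)
    (f : Equiv.Perm (Fin m) → Equiv.Perm (Fin m)) (hf : Function.Injective f) :
    ρ.map f = ρ := by
  have hbij : Function.Bijective f := Finite.injective_iff_bijective.mp hf
  ext T _
  rw [Measure.map_apply (measurable_of_top_dom f) MeasurableSpace.measurableSet_top,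
    perm_uniform_apply ρ hρ, perm_uniform_apply ρ hρ]
  congr 2
  apply Finset.card_bij (fun q _ => f q)
  · intro q hq
    simp only [Set.mem_toFinset, Set.mem_preimage] at *
    exact hq
  · intro a _ b _ hab
    exact hf hab
  · intro t ht
    obtain ⟨q, rfl⟩ := hbij.surjective t
    simp only [Set.mem_toFinset, Set.mem_preimage] at *
    exact ⟨q, ht, rfl⟩

lemma measurable_rank_set {m : ℕ} (a : Fin m) (r' : ℕ) :
    MeasurableSet {vp : (Fin m → ℝ) × Equiv.Perm (Fin m) |
      r' < 1 + (Finset.univ.filter fun j => j ≠ a ∧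
        (vp.1 a < vp.1 j ∨ (vp.1 a = vp.1 j ∧ vp.2 a < vp.2 j))).card} := by
  have hN : Measurable fun vp : (Fin m → ℝ) × Equiv.Perm (Fin m) =>
      ∑ j : Fin m, if (j ≠ a ∧ (vp.1 a < vp.1 j ∨ (vp.1 a = vp.1 j ∧ vp.2 a < vp.2 j)))
        then (1:ℕ) else 0 := by
    refine Finset.measurable_sum _ fun j _ => ?_
    refine Measurable.ite ?_ measurable_const measurable_const
    by_cases hja : j = a
    · subst hja
      simp only [ne_eq, not_true_eq_false, false_and, Set.setOf_false]
      exact MeasurableSet.empty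
    · have hma : Measurable fun vp : (Fin m → ℝ) × Equiv.Perm (Fin m) => vp.1 a :=
        fun s hs => ((measurable_pi_apply a).comp measurable_fst) hs
      have hmj : Measurable fun vp : (Fin m → ℝ) × Equiv.Perm (Fin m) => vp.1 j :=
        fun s hs => ((measurable_pi_apply j).comp measurable_fst) hs
      have hlt : MeasurableSet {vp : (Fin m → ℝ) × Equiv.Perm (Fin m) | vp.1 a < vp.1 j} :=
        measurableSet_lt hma hmj
      have heq : MeasurableSet {vp : (Fin m → ℝ) × Equiv.Perm (Fin m) | vp.1 a = vp.1 j} :=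
        measurableSet_eq_fun hma hmj
      have hperm : MeasurableSet {vp : (Fin m → ℝ) × Equiv.Perm (Fin m) | vp.2 a < vp.2 j} := by
        have hss : {vp : (Fin m → ℝ) × Equiv.Perm (Fin m) | vp.2 a < vp.2 j}
            = Prod.snd ⁻¹' {p : Equiv.Perm (Fin m) | p a < p j} := rfl
        rw [hss]
        exact measurable_snd MeasurableSpace.measurableSet_top
      have : {vp : (Fin m → ℝ) × Equiv.Perm (Fin m) | j ≠ a ∧
          (vp.1 a < vp.1 j ∨ (vp.1 a = vp.1 j ∧ vp.2 a < vp.2 j))}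
          = {vp | vp.1 a < vp.1 j} ∪ ({vp | vp.1 a = vp.1 j} ∩ {vp | vp.2 a < vp.2 j}) := by
        ext vp
        simp [hja]
      rw [this]
      exact hlt.union (heq.inter hperm)
  have hset : {vp : (Fin m → ℝ) × Equiv.Perm (Fin m) |
      r' < 1 + (Finset.univ.filter fun j => j ≠ a ∧
        (vp.1 a < vp.1 j ∨ (vp.1 a = vp.1 j ∧ vp.2 a < vp.2 j))).card}
      = (fun vp : (Fin m → ℝ) × Equiv.Perm (Fin m) =>
          ∑ j : Fin m, if (j ≠ a ∧ (vp.1 a < vp.1 j ∨ (vp.1 a = vp.1 j ∧ vp.2 a < vp.2 j)))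
            then (1:ℕ) else 0) ⁻¹' {t | r' < 1 + t} := by
    ext vp
    simp only [Set.mem_setOf_eq, Set.mem_preimage, Finset.card_filter]
  rw [hset]
  exact hN MeasurableSpace.measurableSet_top

lemma law_pi_of_iIndep {Ω : Type*} [MeasurableSpace Ω] (P : Measure Ω) [IsProbabilityMeasure P]
    {ι : Type*} [Fintype ι] (g : ι → Ω → ℝ) (hgm : ∀ i, Measurable (g i))
    (hind : iIndepFun g P) :
    P.map (fun ω i => g i ω) = Measure.pi (fun i => P.map (g i)) := by
  haveI : ∀ i, IsProbabilityMeasure (P.map (g i)) :=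
    fun i => Measure.isProbabilityMeasure_map (hgm i).aemeasurable
  refine (Measure.pi_eq fun A hA => ?_).symm
  rw [Measure.map_apply (measurable_pi_lambda _ hgm) (MeasurableSet.univ_pi hA)]
  have hpre : (fun ω i => g i ω) ⁻¹' (Set.univ.pi A) = ⋂ i ∈ Finset.univ, g i ⁻¹' A i := by
    ext ω
    simp [Set.mem_univ_pi]
  rw [hpre, (iIndepFun_iff_measure_inter_preimage_eq_mul.mp hind) Finset.univ fun i _ => hA i]
  exact Finset.prod_congr rfl fun i _ =>
    (Measure.map_apply (hgm i) (hA i)).symm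

end Helpers

/-- Exact coverage of the one-sided RMM test: under i.i.d. sampling from a
distribution symmetric about `μ`, the rank `R(μ)` of the original MoM statistic among
the `m` sign-randomized MoM statistics (with random tie-breaking) exceeds `m - r`
with probability exactly `r/m`.  The sign column `j = 0` is constantly `1`, so that
`S 0` is the statistic of the original sample. -/
theorem stmt15 {Ω : Type*} [MeasurableSpace Ω] (P : Measure Ω) [IsProbabilityMeasure P]
    (n m k r : ℕ) (hm : 0 < m) (hr : 1 ≤ r) (hrm : r ≤ m) (hk : 0 < k)
    (μ : ℝ)
    (X : Fin n → Ω → ℝ) (hXm : ∀ i, Measurable (X i))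
    (hXindep : iIndepFun X P)
    (hXid : ∀ i j, Measure.map (X i) P = Measure.map (X j) P)
    (hsym : ∀ i, Measure.map (fun ω => X i ω - μ) P
      = Measure.map (fun ω => μ - X i ω) P)
    (α : Fin n → Fin m → Ω → ℝ) (hαm : ∀ i j, Measurable (α i j))
    (hα0 : ∀ i, α i ⟨0, hm⟩ = fun _ => 1)
    (hrad : ∀ i j, j ≠ ⟨0, hm⟩ → Measure.map (α i j) P
      = (2⁻¹ : ℝ≥0∞) • Measure.dirac (1 : ℝ) + (2⁻¹ : ℝ≥0∞) • Measure.dirac (-1 : ℝ))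
    (hαindep : iIndepFun
      (fun (p : Fin n × Fin m) ω => α p.1 p.2 ω) P)
    (π : Ω → Equiv.Perm (Fin m)) (hπm : Measurable π)
    (hπunif : ∀ σ : Equiv.Perm (Fin m),
      P {ω | π ω = σ} = (Fintype.card (Equiv.Perm (Fin m)) : ℝ≥0∞)⁻¹)
    (hindep1 : IndepFun (fun ω (i : Fin n) => X i ω)
      (fun ω => ((fun p : Fin n × Fin m => α p.1 p.2 ω), π ω)) P)
    (hindep2 : IndepFun (fun ω (p : Fin n × Fin m) => α p.1 p.2 ω) π P)
    (B : Fin k → Finset (Fin n)) (hBne : ∀ ℓ, (B ℓ).Nonempty)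
    (hdisj : ∀ ℓ ℓ', ℓ ≠ ℓ' → Disjoint (B ℓ) (B ℓ')) :
    let S : Fin m → Ω → ℝ := fun j ω =>
      medList 0 (List.ofFn fun ℓ =>
        ((B ℓ).card : ℝ)⁻¹ * ∑ i ∈ B ℓ, α i j ω * (X i ω - μ))
    let prec : Ω → Fin m → Fin m → Prop := fun ω j l =>
      S j ω < S l ω ∨ (S j ω = S l ω ∧ π ω j < π ω l)
    let R : Ω → ℕ := fun ω =>
      1 + (Finset.univ.filter fun j : Fin m => j ≠ ⟨0, hm⟩ ∧ prec ω ⟨0, hm⟩ j).card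
    P {ω | m - r < R ω} = (r : ℝ≥0∞) / (m : ℝ≥0∞) := by
  intro S prec R
  have z0def : (⟨0, hm⟩ : Fin m) = ⟨0, hm⟩ := rfl
  set z0 : Fin m := ⟨0, hm⟩ with hz0
  set Xv : Ω → (Fin n → ℝ) := fun ω i => X i ω with hXv
  set Am : Ω → (Fin n × Fin m → ℝ) := fun ω p => α p.1 p.2 ω with hAm
  have hXvm : Measurable Xv := measurable_pi_lambda _ hXm
  have hAmm : Measurable Am := measurable_pi_lambda _ fun p => hαm p.1 p.2
  set ξ : Fin n → Measure ℝ := fun i => P.map (X i) with hξ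
  haveI hξP : ∀ i, IsProbabilityMeasure (ξ i) :=
    fun i => Measure.isProbabilityMeasure_map (hXm i).aemeasurable
  -- laws of the basic random elements
  have hmapX : P.map Xv = Measure.pi ξ := law_pi_of_iIndep P X hXm hXindep
  have hmapA : P.map Am = Measure.pi (sgnM (n := n) z0) := by
    rw [hAm, law_pi_of_iIndep P (fun (p : Fin n × Fin m) ω => α p.1 p.2 ω) (fun p => hαm p.1 p.2) hαindep]
    congr 1
    funext p
    by_cases h : p.2 = z0
    · have h1 : α p.1 p.2 = fun _ => (1:ℝ) := by rw [h, hz0]; exact hα0 p.1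
      have h2 : sgnM (n := n) z0 p = Measure.dirac (1:ℝ) := by rw [sgnM, if_pos h]
      rw [h2, h1, Measure.map_const]
      simp
    · have h2 : sgnM (n := n) z0 p = radM := by rw [sgnM, if_neg h]
      rw [h2]
      exact hrad p.1 p.2 h
  set μπ : Measure (Equiv.Perm (Fin m)) := P.map π with hμπ
  haveI : IsProbabilityMeasure μπ := Measure.isProbabilityMeasure_map hπm.aemeasurable
  have hμπs : ∀ q : Equiv.Perm (Fin m),
      μπ {q} = (Fintype.card (Equiv.Perm (Fin m)) : ℝ≥0∞)⁻¹ := by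
    intro q
    rw [hμπ, Measure.map_apply hπm MeasurableSpace.measurableSet_top]
    exact hπunif q
  -- joint law of ((X, α), π)
  have hXA : IndepFun Xv Am P := by
    have h := hindep1.comp measurable_id
      (measurable_fst : Measurable (Prod.fst :
        (Fin n × Fin m → ℝ) × Equiv.Perm (Fin m) → (Fin n × Fin m → ℝ)))
    exact h
  set base : Measure ((Fin n → ℝ) × (Fin n × Fin m → ℝ)) :=
    (Measure.pi ξ).prod (Measure.pi (sgnM (n := n) z0)) with hbase
  have hjoint : P.map (fun ω => (Xv ω, Am ω)) = base := by
    rw [hbase, ← hmapX, ← hmapA]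
    exact (indepFun_iff_map_prod_eq_prod_map_map hXvm.aemeasurable hAmm.aemeasurable).mp hXA
  have hAπ : P.map (fun ω => (Am ω, π ω)) = (Measure.pi (sgnM (n := n) z0)).prod μπ := by
    rw [← hmapA, hμπ]
    exact (indepFun_iff_map_prod_eq_prod_map_map hAmm.aemeasurable hπm.aemeasurable).mp hindep2
  have hbig : P.map (fun ω => ((Xv ω, Am ω), π ω)) = base.prod μπ := by
    have h1 : P.map (fun ω => (Xv ω, (Am ω, π ω)))
        = (Measure.pi ξ).prod ((Measure.pi (sgnM (n := n) z0)).prod μπ) := by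
      rw [← hmapX, ← hAπ]
      exact (indepFun_iff_map_prod_eq_prod_map_map hXvm.aemeasurable
        (hAmm.prodMk hπm).aemeasurable).mp hindep1
    have e := (measurePreserving_prodAssoc (Measure.pi ξ)
      (Measure.pi (sgnM (n := n) z0)) μπ).symm MeasurableEquiv.prodAssoc
    calc P.map (fun ω => ((Xv ω, Am ω), π ω))
        = (P.map (fun ω => (Xv ω, (Am ω, π ω)))).map MeasurableEquiv.prodAssoc.symm := by
          rw [Measure.map_map MeasurableEquiv.prodAssoc.symm.measurable
            (hXvm.prodMk (hAmm.prodMk hπm))]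
          rfl
      _ = base.prod μπ := by rw [h1, hbase]; exact e.map_eq
  -- the MoM statistic as a function of the data matrix
  set M : (Fin n × Fin m → ℝ) → (Fin m → ℝ) := fun Y j =>
    medList 0 (List.ofFn fun ℓ => ((B ℓ).card : ℝ)⁻¹ * ∑ i ∈ B ℓ, Y (i, j)) with hMdef
  have hMm : Measurable M := by
    refine measurable_pi_lambda _ fun j => ?_
    exact (measurable_medList_ofFn 0).comp
      (measurable_pi_lambda _ fun ℓ =>
        (Finset.measurable_sum _ fun i _ => measurable_pi_apply (i, j)).const_mul _)
  set Sv : Ω → (Fin m → ℝ) := fun ω => M (Fmap μ 1 (Xv ω, Am ω)) with hSvdef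
  have hSvm : Measurable Sv :=
    hMm.comp ((measurable_Fmap μ 1).comp (hXvm.prodMk hAmm))
  set ν : Measure ((Fin m → ℝ) × Equiv.Perm (Fin m)) :=
    P.map (fun ω => (Sv ω, π ω)) with hν
  haveI : IsProbabilityMeasure ν :=
    Measure.isProbabilityMeasure_map (hSvm.prodMk hπm).aemeasurable
  have hν1 : ν = ((base.map (Fmap μ 1)).map M).prod μπ := by
    have hGm : Measurable (M ∘ Fmap (n := n) μ 1) := hMm.comp (measurable_Fmap μ 1)
    have h2 : ν = (P.map (fun ω => ((Xv ω, Am ω), π ω))).map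
        (Prod.map (M ∘ Fmap (n := n) μ 1) id) := by
      rw [Measure.map_map (hGm.prodMap measurable_id)
        ((hXvm.prodMk hAmm).prodMk hπm)]
      rfl
    rw [h2, hbig, ← Measure.map_prod_map _ _ hGm measurable_id,
      Measure.map_id, Measure.map_map hMm (measurable_Fmap μ 1)]
  -- symmetry of each coordinate law
  have hsym' : ∀ i, (ξ i).map (fun z => 2*μ - z) = ξ i := by
    intro i
    have h1 : (P.map (fun ω => X i ω - μ)).map (fun z => z + μ) = P.map (X i) := by
      rw [Measure.map_map (f := fun ω => X i ω - μ) (measurable_add_const μ) ((hXm i).sub measurable_const)]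
      congr 1
      funext ω
      show X i ω - μ + μ = X i ω
      ring
    have h2 : (P.map (fun ω => μ - X i ω)).map (fun z => z + μ)
        = P.map (fun ω => 2*μ - X i ω) := by
      rw [Measure.map_map (f := fun ω => μ - X i ω) (measurable_add_const μ) (measurable_const.sub (hXm i))]
      congr 1
      funext ω
      show μ - X i ω + μ = 2*μ - X i ω
      ring
    have h3 : P.map (X i) = P.map (fun ω => 2*μ - X i ω) := by
      rw [← h1, hsym i, h2]
    calc (ξ i).map (fun z => 2*μ - z)
        = P.map (fun ω => 2*μ - X i ω) := by
          rw [hξ]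
          rw [Measure.map_map (g := fun z : ℝ => 2*μ - z) (measurable_const.sub measurable_id :
            Measurable fun z : ℝ => 2*μ - z) (hXm i)]
          rfl
      _ = ξ i := h3.symm
  -- invariance of ν under column relabelings
  have hνinv : ∀ σ : Equiv.Perm (Fin m),
      ν.map (fun vp : (Fin m → ℝ) × Equiv.Perm (Fin m) => (vp.1 ∘ σ, σ.trans vp.2)) = ν := by
    intro σ
    have hcm : Measurable fun v : Fin m → ℝ => v ∘ σ :=
      measurable_pi_lambda _ fun j => measurable_pi_apply (σ j)
    have hpm : Measurable fun p : Equiv.Perm (Fin m) => σ.trans p := measurable_of_top_dom _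
    have hcolm : Measurable fun Y : Fin n × Fin m → ℝ => (fun p : Fin n × Fin m => Y (p.1, σ p.2)) :=
      measurable_pi_lambda _ fun p => measurable_pi_apply (p.1, σ p.2)
    have hTs : (fun vp : (Fin m → ℝ) × Equiv.Perm (Fin m) => (vp.1 ∘ σ, σ.trans vp.2))
        = Prod.map (fun v : Fin m → ℝ => v ∘ σ) (fun p => σ.trans p) := rfl
    rw [hν1, hTs, ← Measure.map_prod_map _ _ hcm hpm]
    congr 1
    · rw [Measure.map_map hcm hMm]
      have h5 : ((fun v : Fin m → ℝ => v ∘ σ) ∘ M)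
          = M ∘ (fun Y (p : Fin n × Fin m) => Y (p.1, σ p.2)) := rfl
      rw [h5, ← Measure.map_map hMm hcolm, Measure.map_map hcolm (measurable_Fmap μ 1)]
      have h6 : ((fun Y (p : Fin n × Fin m) => Y (p.1, σ p.2)) ∘ Fmap μ 1)
          = Fmap (n := n) μ σ := rfl
      rw [h6, map_Fmap_perm z0 μ ξ hsym' σ]
    · refine perm_uniform_map μπ hμπs _ ?_
      intro p q h
      have h2 := congrArg (fun e : Equiv.Perm (Fin m) => σ.symm.trans e) h
      simpa [← Equiv.trans_assoc] using h2
  -- the rank events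
  set ea : Fin m → Set ((Fin m → ℝ) × Equiv.Perm (Fin m)) := fun a =>
    {vp | m - r < 1 + (Finset.univ.filter fun j => j ≠ a ∧
      (vp.1 a < vp.1 j ∨ (vp.1 a = vp.1 j ∧ vp.2 a < vp.2 j))).card} with hea
  have heam : ∀ a, MeasurableSet (ea a) := fun a => measurable_rank_set a (m - r)
  have hR : ∀ ω, R ω = 1 + (Finset.univ.filter fun j : Fin m => j ≠ z0 ∧
      (Sv ω z0 < Sv ω j ∨ (Sv ω z0 = Sv ω j ∧ π ω z0 < π ω j))).card := by
    intro ω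
    show 1 + _ = 1 + _
    congr 1
  have hP0 : P {ω | m - r < R ω} = ν (ea z0) := by
    rw [hν, Measure.map_apply (hSvm.prodMk hπm) (heam z0)]
    congr 1
  have hsame : ∀ a, ν (ea a) = ν (ea z0) := by
    intro a
    set σ : Equiv.Perm (Fin m) := Equiv.swap z0 a with hσdef
    have hσ : σ z0 = a := Equiv.swap_apply_left z0 a
    have hTm : Measurable (fun vp : (Fin m → ℝ) × Equiv.Perm (Fin m) =>
        (vp.1 ∘ σ, σ.trans vp.2)) :=
      (measurable_pi_lambda _ fun j => (measurable_pi_apply (σ j)).comp measurable_fst).prodMk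
        (fun s _ => by
          have hps : (fun vp : (Fin m → ℝ) × Equiv.Perm (Fin m) => σ.trans vp.2) ⁻¹' s
              = Prod.snd ⁻¹' ((fun p : Equiv.Perm (Fin m) => σ.trans p) ⁻¹' s) := rfl
          rw [hps]
          exact measurable_snd MeasurableSpace.measurableSet_top)
    have hpre : (fun vp : (Fin m → ℝ) × Equiv.Perm (Fin m) =>
        (vp.1 ∘ σ, σ.trans vp.2)) ⁻¹' (ea z0) = ea a := by
      ext vp
      simp only [Set.mem_preimage, hea, Set.mem_setOf_eq]
      have hcard : (Finset.univ.filter fun j => j ≠ z0 ∧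
          ((vp.1 ∘ σ) z0 < (vp.1 ∘ σ) j ∨
            ((vp.1 ∘ σ) z0 = (vp.1 ∘ σ) j ∧ (σ.trans vp.2) z0 < (σ.trans vp.2) j))).card
          = (Finset.univ.filter fun j => j ≠ a ∧
            (vp.1 a < vp.1 j ∨ (vp.1 a = vp.1 j ∧ vp.2 a < vp.2 j))).card := by
        rw [← card_filter_perm σ (fun j => j ≠ a ∧
          (vp.1 a < vp.1 j ∨ (vp.1 a = vp.1 j ∧ vp.2 a < vp.2 j)))]
        congr 1
        apply Finset.filter_congr
        intro j _
        have hne : σ j = a ↔ j = z0 :=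
          ⟨fun hh => σ.injective (by rw [hh, ← hσ]), fun hh => by rw [hh, hσ]⟩
        simp only [Function.comp_apply, Equiv.trans_apply, hσ]
        exact and_congr (not_congr hne).symm Iff.rfl
      rw [hcard]
    calc ν (ea a)
        = ν ((fun vp : (Fin m → ℝ) × Equiv.Perm (Fin m) =>
            (vp.1 ∘ σ, σ.trans vp.2)) ⁻¹' (ea z0)) := by rw [hpre]
      _ = (ν.map (fun vp : (Fin m → ℝ) × Equiv.Perm (Fin m) =>
            (vp.1 ∘ σ, σ.trans vp.2))) (ea z0) := (Measure.map_apply hTm (heam z0)).symm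
      _ = ν (ea z0) := by rw [hνinv σ]
  -- each point lies in exactly r of the rank events
  have hcount : ∀ vp : (Fin m → ℝ) × Equiv.Perm (Fin m),
      (Finset.univ.filter fun a => vp ∈ ea a).card = r := by
    intro vp
    have hinj : Function.Injective fun j : Fin m => toLex (vp.1 j, vp.2 j) := by
      intro j j' h
      have h2 := congrArg (fun x : Lex (ℝ × Fin m) => (ofLex x).2) h
      simp only at h2
      exact vp.2.injective h2
    have hrc := rank_count hm hr hrm (fun j => toLex (vp.1 j, vp.2 j)) hinj
    have hfe : ∀ a : Fin m, (Finset.univ.filter fun j => j ≠ a ∧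
        (vp.1 a < vp.1 j ∨ (vp.1 a = vp.1 j ∧ vp.2 a < vp.2 j)))
        = (Finset.univ.filter fun j =>
            toLex (vp.1 a, vp.2 a) < toLex (vp.1 j, vp.2 j)) := by
      intro a
      apply Finset.filter_congr
      intro j _
      rw [Prod.Lex.lt_iff]
      constructor
      · rintro ⟨hja, h⟩
        exact h
      · intro h
        refine ⟨?_, h⟩
        intro hj
        subst hj
        rcases h with h | ⟨_, h⟩
        · exact lt_irrefl _ h
        · exact lt_irrefl _ h
    refine Eq.trans ?_ hrc
    congr 1
    apply Finset.filter_congr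
    intro a _
    have hmem : vp ∈ ea a ↔ m - r < 1 + (Finset.univ.filter fun j => j ≠ a ∧
        (vp.1 a < vp.1 j ∨ (vp.1 a = vp.1 j ∧ vp.2 a < vp.2 j))).card := Iff.rfl
    rw [hmem, hfe a]
  have hsum : (m : ℝ≥0∞) * ν (ea z0) = r := by
    have h1 : ∑ a : Fin m, ν (ea a) = (r : ℝ≥0∞) := by
      have h2 : ∀ a : Fin m, ν (ea a)
          = ∫⁻ vp, (ea a).indicator (fun _ => (1:ℝ≥0∞)) vp ∂ν := by
        intro a
        rw [lintegral_indicator (heam a)]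
        simp
      rw [Finset.sum_congr rfl fun a _ => h2 a,
        ← lintegral_finset_sum _ fun a _ => measurable_const.indicator (heam a)]
      have h3 : ∀ vp : (Fin m → ℝ) × Equiv.Perm (Fin m),
          ∑ a : Fin m, (ea a).indicator (fun _ => (1:ℝ≥0∞)) vp = (r:ℝ≥0∞) := by
        intro vp
        have h4 : ∑ a : Fin m, (ea a).indicator (fun _ => (1:ℝ≥0∞)) vp
            = ∑ a : Fin m, if vp ∈ ea a then (1:ℝ≥0∞) else 0 := by
          refine Finset.sum_congr rfl fun a _ => ?_
          by_cases h : vp ∈ ea a <;> simp [h]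
        rw [h4, Finset.sum_boole, hcount vp]
      rw [lintegral_congr h3, lintegral_const, measure_univ, mul_one]
    rw [← h1, Finset.sum_congr rfl fun a _ => hsame a, Finset.sum_const, Finset.card_univ,
      Fintype.card_fin, nsmul_eq_mul]
  rw [hP0, ENNReal.eq_div_iff (Nat.cast_ne_zero.mpr hm.ne') (by simp)]
  exact hsum
end
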